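/- For integers t, x, and y with y > 0, the quintuple product satisfies the shift relation Q(q^{x+ty}, q^y) = q^{-3tx - t(3t-1)y/2} · Q(q^x, q^y). -/

import Mathlib

open Filter Complex

/-- The q-Pochhammer infinite product `(a;q)_∞ = ∏_{k≥0} (1 - a q^k)`. -/
noncomputable def poch (a q : ℂ) : ℂ := ∏' k : ℕ, (1 - a * q ^ k)

/-- The quintuple product `Q(z,q) = (z,q/z,q;q)_∞ (qz²,q/z²;q²)_∞`. -/
noncomputable def quint (z q : ℂ) : ℂ :=
  poch z q * poch (q / z) q * poch q q * poch (q * z ^ 2) (q ^ 2) * poch (q / z ^ 2) (q ^ 2)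

private lemma multipliable_poch_aux (b q : ℂ) (hq1 : ‖q‖ < 1) :
    Multipliable fun k : ℕ => 1 - b * q ^ k := by
  by_cases hz : ∀ k : ℕ, 1 - b * q ^ k ≠ 0
  · have hsmall : ∀ᶠ k : ℕ in atTop, ‖b * q ^ k‖ ≤ 1 / 2 := by
      have h0 : Tendsto (fun k : ℕ => ‖b * q ^ k‖) atTop (nhds 0) := by
        simpa using ((tendsto_pow_atTop_nhds_zero_of_norm_lt_one hq1).const_mul b).norm
      exact h0.eventually_le_const (by norm_num)
    have hsum : Summable fun k : ℕ => Complex.log (1 - b * q ^ k) := by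
      apply Summable.of_norm_bounded_eventually_nat (g := fun k => 3 / 2 * (‖b‖ * ‖q‖ ^ k))
      · exact ((summable_geometric_of_lt_one (norm_nonneg q) hq1).mul_left ‖b‖).mul_left (3 / 2)
      · filter_upwards [hsmall] with k hk
        have h1 : (1 : ℂ) - b * q ^ k = 1 + -(b * q ^ k) := by ring
        rw [h1]
        calc ‖Complex.log (1 + -(b * q ^ k))‖ ≤ 3 / 2 * ‖-(b * q ^ k)‖ :=
              Complex.norm_log_one_add_half_le_self (by rwa [norm_neg])
          _ = 3 / 2 * (‖b‖ * ‖q‖ ^ k) := by rw [norm_neg, norm_mul, norm_pow]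
    exact Complex.multipliable_of_summable_log hsum
  · push_neg at hz
    obtain ⟨k₀, hk₀⟩ := hz
    refine ⟨0, ?_⟩
    have h0 : Tendsto (fun _ : Finset ℕ => (0 : ℂ)) atTop (nhds 0) := tendsto_const_nhds
    refine h0.congr' ?_
    filter_upwards [eventually_ge_atTop ({k₀} : Finset ℕ)] with s hs
    exact (Finset.prod_eq_zero (hs (Finset.mem_singleton_self k₀)) hk₀).symm

private lemma poch_split (a q : ℂ) (hq1 : ‖q‖ < 1) :
    poch a q = (1 - a) * poch (a * q) q := by
  unfold poch
  have hm : Multipliable fun k : ℕ => 1 - a * q ^ (k + 1) :=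
    (multipliable_poch_aux (a * q) q hq1).congr fun k => by rw [pow_succ']; ring
  rw [tprod_eq_zero_mul' (f := fun k : ℕ => 1 - a * q ^ k) hm, pow_zero, mul_one]
  congr 1
  exact tprod_congr fun k => by rw [pow_succ']; ring

private lemma quint_step (z q : ℂ) (hz : z ≠ 0) (hq0 : q ≠ 0) (hq1 : ‖q‖ < 1) :
    quint (q * z) q = q⁻¹ * (z⁻¹) ^ 3 * quint z q := by
  have hq2 : ‖q ^ 2‖ < 1 := by
    rw [norm_pow]
    exact pow_lt_one₀ (norm_nonneg q) hq1 two_ne_zero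
  have h1 : poch (q / (q * z)) q = (1 - z⁻¹) * poch (q / z) q := by
    rw [show q / (q * z) = z⁻¹ by field_simp, poch_split _ _ hq1,
      show z⁻¹ * q = q / z by field_simp]
  have h2 : poch (q / (q * z) ^ 2) (q ^ 2) = (1 - q⁻¹ * (z⁻¹) ^ 2) * poch (q / z ^ 2) (q ^ 2) := by
    rw [show q / (q * z) ^ 2 = q⁻¹ * (z⁻¹) ^ 2 by field_simp, poch_split _ _ hq2,
      show q⁻¹ * (z⁻¹) ^ 2 * q ^ 2 = q / z ^ 2 by field_simp]
  have h3 : poch z q = (1 - z) * poch (q * z) q := by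
    rw [poch_split _ _ hq1, mul_comm z q]
  have h4 : poch (q * z ^ 2) (q ^ 2) = (1 - q * z ^ 2) * poch (q * z ^ 2 * q ^ 2) (q ^ 2) :=
    poch_split _ _ hq2
  have h5 : poch (q * (q * z) ^ 2) (q ^ 2) = poch (q * z ^ 2 * q ^ 2) (q ^ 2) := by ring_nf
  have hscal : (1 - z⁻¹) * (1 - q⁻¹ * (z⁻¹) ^ 2)
      = q⁻¹ * (z⁻¹) ^ 3 * ((1 - z) * (1 - q * z ^ 2)) := by
    field_simp
    ring
  unfold quint
  rw [h1, h2, h3, h4, h5]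
  linear_combination (poch (q * z) q * poch (q / z) q * poch q q *
    poch (q * z ^ 2 * q ^ 2) (q ^ 2) * poch (q / z ^ 2) (q ^ 2)) * hscal

private lemma exp_step (x y t u : ℤ) (h : u = t + 1) :
    -(3 * u * x) - u * (3 * u - 1) / 2 * y
      = (-y - 3 * (x + t * y)) + (-(3 * t * x) - t * (3 * t - 1) / 2 * y) := by
  subst h
  obtain ⟨m, rfl⟩ | ⟨m, rfl⟩ := Int.even_or_odd t
  · rw [show (m + m + 1) * (3 * (m + m + 1) - 1) = 2 * ((2 * m + 1) * (3 * m + 1)) by ring,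
      show (m + m) * (3 * (m + m) - 1) = 2 * (m * (6 * m - 1)) by ring,
      Int.mul_ediv_cancel_left _ two_ne_zero, Int.mul_ediv_cancel_left _ two_ne_zero]
    ring
  · rw [show (2 * m + 1 + 1) * (3 * (2 * m + 1 + 1) - 1) = 2 * ((m + 1) * (6 * m + 5)) by ring,
      show (2 * m + 1) * (3 * (2 * m + 1) - 1) = 2 * ((2 * m + 1) * (3 * m + 1)) by ring,
      Int.mul_ediv_cancel_left _ two_ne_zero, Int.mul_ediv_cancel_left _ two_ne_zero]
    ring

/-- the shift relation
`Q(q^{x+ty}, q^y) = q^{-3tx - t(3t-1)y/2} Q(q^x, q^y)`, stated for `0 < ‖q‖ < 1`. -/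
theorem quintuple_shift (t x y : ℤ) (hy : 0 < y) (q : ℂ)
    (hq0 : q ≠ 0) (hq1 : ‖q‖ < 1) :
    quint (q ^ (x + t * y)) (q ^ y) =
      q ^ (-(3 * t * x) - t * (3 * t - 1) / 2 * y) * quint (q ^ x) (q ^ y) := by
  have hqy1 : ‖q ^ y‖ < 1 := by
    rw [show y = ((y.toNat : ℕ) : ℤ) by omega, zpow_natCast, norm_pow]
    exact pow_lt_one₀ (norm_nonneg q) hq1 (by omega)
  have key : ∀ s : ℤ, quint (q ^ (s + y)) (q ^ y) = q ^ (-y - 3 * s) * quint (q ^ s) (q ^ y) := by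
    intro s
    have h := quint_step (q ^ s) (q ^ y) (zpow_ne_zero s hq0) (zpow_ne_zero y hq0) hqy1
    rw [← zpow_add₀ hq0] at h
    rw [show s + y = y + s by ring, h]
    congr 1
    rw [← zpow_neg, ← zpow_neg, ← zpow_natCast (q ^ (-s)) 3, ← zpow_mul, ← zpow_add₀ hq0]
    congr 1
    push_cast
    ring
  induction t using Int.induction_on with
  | zero => norm_num
  | succ k ih =>
    rw [show x + ((k : ℤ) + 1) * y = (x + (k : ℤ) * y) + y by ring, key, ih, ← mul_assoc,
      ← zpow_add₀ hq0]
    exact congrArg (fun e : ℤ => q ^ e * quint (q ^ x) (q ^ y))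
      (exp_step x y (k : ℤ) ((k : ℤ) + 1) rfl).symm
  | pred k ih =>
    have hkey := key (x + (-(k : ℤ) - 1) * y)
    rw [show (x + (-(k : ℤ) - 1) * y) + y = x + -(k : ℤ) * y by ring, ih] at hkey
    have hne : (q : ℂ) ^ (-y - 3 * (x + (-(k : ℤ) - 1) * y)) ≠ 0 := zpow_ne_zero _ hq0
    apply mul_left_cancel₀ hne
    rw [← hkey, ← mul_assoc, ← zpow_add₀ hq0]
    exact congrArg (fun e : ℤ => q ^ e * quint (q ^ x) (q ^ y))
      (exp_step x y (-(k : ℤ) - 1) (-(k : ℤ)) (by ring))
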